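/- For any continuation K and terms s, u: if SN(s) and SN(K@(u{s/x})), then SN(K@(let x ⇐ pure(s) in u)). -/

import Mathlib

/-!
Metalanguage for algebraic effects (Moggi-style `let` + effect/function symbols),
with the Recursive Path Ordering, following the paper.

Terms use de Bruijn indices.  A signature assigns each rewritable symbol an
arity, tells whether it is an effect symbol or a function symbol, and (for
function symbols) gives argument types and a result type.
-/

/-- Types of the metalanguage: base types, effect (computation) types `E T`,
and arrow types. -/
inductive Ty (B : Type) : Type where
  | base : B → Ty B
  | eff : Ty B → Ty B
  | arrow : Ty B → Ty B → Ty B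

/-- A signature of rewritable symbols. -/
structure Signature (Sym B : Type) : Type where
  arity : Sym → ℕ
  isEffect : Sym → Prop
  argTy : (γ : Sym) → Fin (arity γ) → Ty B
  resTy : Sym → Ty B

/-- Terms of the metalanguage (de Bruijn indices):
variables, λ-abstraction, application, `pure`, symbol application, and `let`. -/
inductive Tm {Sym B : Type} (Sg : Signature Sym B) : Type where
  | var : ℕ → Tm Sg
  | lam : Tm Sg → Tm Sg
  | app : Tm Sg → Tm Sg → Tm Sg
  | pure : Tm Sg → Tm Sg
  | sym : (γ : Sym) → (Fin (Sg.arity γ) → Tm Sg) → Tm Sg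
  | letin : Tm Sg → Tm Sg → Tm Sg

namespace Tm

variable {Sym B : Type} {Sg : Signature Sym B}

/-- Lift a renaming under a binder. -/
def upRen (ρ : ℕ → ℕ) : ℕ → ℕ
  | 0 => 0
  | n + 1 => ρ n + 1

/-- Renaming of de Bruijn variables. -/
def rename (ρ : ℕ → ℕ) : Tm Sg → Tm Sg
  | .var n => .var (ρ n)
  | .lam u => .lam (u.rename (upRen ρ))
  | .app s t => .app (s.rename ρ) (t.rename ρ)
  | .pure t => .pure (t.rename ρ)
  | .sym γ ts => .sym γ (fun i => (ts i).rename ρ)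
  | .letin t u => .letin (t.rename ρ) (u.rename (upRen ρ))

/-- Lift a substitution under a binder. -/
def upSub (σ : ℕ → Tm Sg) : ℕ → Tm Sg
  | 0 => .var 0
  | n + 1 => (σ n).rename Nat.succ

/-- Simultaneous (capture-avoiding) substitution. -/
def subst (σ : ℕ → Tm Sg) : Tm Sg → Tm Sg
  | .var n => σ n
  | .lam u => .lam (u.subst (upSub σ))
  | .app s t => .app (s.subst σ) (t.subst σ)
  | .pure t => .pure (t.subst σ)
  | .sym γ ts => .sym γ (fun i => (ts i).subst σ)
  | .letin t u => .letin (t.subst σ) (u.subst (upSub σ))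

/-- `subst0 t u` is `u{t/x}`: substitute `t` for the outermost variable of `u`. -/
def subst0 (t : Tm Sg) (u : Tm Sg) : Tm Sg :=
  u.subst (fun n => match n with | 0 => t | n + 1 => .var n)

/-- `FreeIn x t`: the de Bruijn variable `x` occurs free in `t`. -/
def FreeIn : Tm Sg → ℕ → Prop
  | .var n, x => x = n
  | .lam u, x => u.FreeIn (x + 1)
  | .app s t, x => s.FreeIn x ∨ t.FreeIn x
  | .pure t, x => t.FreeIn x
  | .sym _ ts, x => ∃ i, (ts i).FreeIn x
  | .letin t u, x => t.FreeIn x ∨ u.FreeIn (x + 1)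

end Tm

/-- The recursive path ordering `s ≻ t` generated by a precedence `gt` on symbols:
(1) same head symbol, lexicographically smaller arguments, and `s` dominates every
argument of `t`; (2) smaller head symbol and `s` dominates every argument of `t`;
(3) some argument `sᵢ` of `s` satisfies `sᵢ ⪰ t`. -/
inductive RPO {Sym B : Type} {Sg : Signature Sym B} (gt : Sym → Sym → Prop) :
    Tm Sg → Tm Sg → Prop where
  | lexArgs {γ : Sym} {s t : Fin (Sg.arity γ) → Tm Sg} (i : Fin (Sg.arity γ))
      (hpre : ∀ j, j < i → s j = t j) (hlt : RPO gt (s i) (t i))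
      (hdom : ∀ j, RPO gt (.sym γ s) (t j)) :
      RPO gt (.sym γ s) (.sym γ t)
  | symGt {γ γ' : Sym} {s : Fin (Sg.arity γ) → Tm Sg} {t : Fin (Sg.arity γ') → Tm Sg}
      (hγ : gt γ γ') (hdom : ∀ j, RPO gt (.sym γ s) (t j)) :
      RPO gt (.sym γ s) (.sym γ' t)
  | subtermLt {γ : Sym} {s : Fin (Sg.arity γ) → Tm Sg} (i : Fin (Sg.arity γ)) {t : Tm Sg}
      (h : RPO gt (s i) t) :
      RPO gt (.sym γ s) t
  | subtermEq {γ : Sym} {s : Fin (Sg.arity γ) → Tm Sg} (i : Fin (Sg.arity γ)) {t : Tm Sg}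
      (h : s i = t) :
      RPO gt (.sym γ s) t

/-- The relation `≻̇`: the compatible closure (closure under all term contexts)
of the union of the RPO `≻` and the metalanguage rewrites `⇝ml`
(abs-β, let-β, let-assoc, eff-assoc). -/
inductive Step {Sym B : Type} {Sg : Signature Sym B} (gt : Sym → Sym → Prop) :
    Tm Sg → Tm Sg → Prop where
  | rpo {s t : Tm Sg} : RPO gt s t → Step gt s t
  | beta {u t : Tm Sg} : Step gt (.app (.lam u) t) (Tm.subst0 t u)
  | letBeta {t u : Tm Sg} : Step gt (.letin (.pure t) u) (Tm.subst0 t u)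
  | letAssoc {t₁ t₂ u : Tm Sg} :
      Step gt (.letin (.letin t₁ t₂) u)
        (.letin t₁ (.letin t₂ (u.rename (Tm.upRen Nat.succ))))
  | effAssoc {e : Sym} {ts : Fin (Sg.arity e) → Tm Sg} {u : Tm Sg} (he : Sg.isEffect e) :
      Step gt (.letin (.sym e ts) u) (.sym e fun i => .letin (ts i) u)
  | congLam {u u' : Tm Sg} : Step gt u u' → Step gt (.lam u) (.lam u')
  | congApp₁ {s s' t : Tm Sg} : Step gt s s' → Step gt (.app s t) (.app s' t)
  | congApp₂ {s t t' : Tm Sg} : Step gt t t' → Step gt (.app s t) (.app s t')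
  | congPure {t t' : Tm Sg} : Step gt t t' → Step gt (.pure t) (.pure t')
  | congSym {γ : Sym} {ts : Fin (Sg.arity γ) → Tm Sg} {i : Fin (Sg.arity γ)} {t' : Tm Sg} :
      Step gt (ts i) t' → Step gt (.sym γ ts) (.sym γ (Function.update ts i t'))
  | congLet₁ {t t' u : Tm Sg} : Step gt t t' → Step gt (.letin t u) (.letin t' u)
  | congLet₂ {t u u' : Tm Sg} : Step gt u u' → Step gt (.letin t u) (.letin t u')

/-- `SN gt t`: `t` is strongly normalizing under `≻̇` (every reduction sequence
from `t` terminates, i.e. `t` is accessible for the converse of `Step gt`). -/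
def SN {Sym B : Type} {Sg : Signature Sym B} (gt : Sym → Sym → Prop) (t : Tm Sg) : Prop :=
  Acc (fun a b => Step gt b a) t

/-- Continuations: stacks of frames `let x ⇐ [] in u`. -/
inductive Kont {Sym B : Type} (Sg : Signature Sym B) : Type where
  | nil : Kont Sg
  | cons : Kont Sg → Tm Sg → Kont Sg

namespace Kont

variable {Sym B : Type} {Sg : Signature Sym B}

/-- `K.plug t` = `K@t`: plug a term into the hole of a continuation. -/
def plug : Kont Sg → Tm Sg → Tm Sg
  | .nil, t => t
  | .cons K u, t => K.plug (.letin t u)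

/-- `|K|`: the number of frames of a continuation. -/
def len : Kont Sg → ℕ
  | .nil => 0
  | .cons K _ => K.len + 1

end Kont

/-- The reducibility predicate, by recursion on the type:
`Red B t = SN t`; `Red (S→T) s` means `s t` is reducible for every reducible `t`;
`Red (E T) t` means `K@t` is SN for every continuation `K ∈ Red_T^⊤`. -/
def Red {Sym B : Type} {Sg : Signature Sym B} (gt : Sym → Sym → Prop) :
    Ty B → Tm Sg → Prop
  | .base _, t => SN gt t
  | .arrow S T, s => ∀ t : Tm Sg, Red gt S t → Red gt T (.app s t)
  | .eff T, t => ∀ K : Kont Sg,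
      (∀ u : Tm Sg, Red gt T u → SN gt (K.plug (.pure u))) → SN gt (K.plug t)

/-- `Red_T^⊤(K)`: `K@pure(t)` is SN for every `t ∈ Red_T`. -/
def RedTop {Sym B : Type} {Sg : Signature Sym B} (gt : Sym → Sym → Prop)
    (T : Ty B) (K : Kont Sg) : Prop :=
  ∀ t : Tm Sg, Red gt T t → SN gt (K.plug (.pure t))

/-- Typing judgment `Γ ⊢ t : T` of the metalanguage (contexts are lists of types,
read by de Bruijn index).  Effect symbols take `n` arguments of a common type
`E T` and return `E T`; function symbols follow their declared signature. -/
inductive HasTy {Sym B : Type} (Sg : Signature Sym B) :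
    List (Ty B) → Tm Sg → Ty B → Prop where
  | var {Γ : List (Ty B)} {n : ℕ} {T : Ty B} :
      Γ[n]? = some T → HasTy Sg Γ (.var n) T
  | lam {Γ : List (Ty B)} {S T : Ty B} {u : Tm Sg} :
      HasTy Sg (S :: Γ) u T → HasTy Sg Γ (.lam u) (.arrow S T)
  | app {Γ : List (Ty B)} {S T : Ty B} {s t : Tm Sg} :
      HasTy Sg Γ s (.arrow S T) → HasTy Sg Γ t S → HasTy Sg Γ (.app s t) T
  | pure {Γ : List (Ty B)} {T : Ty B} {t : Tm Sg} :
      HasTy Sg Γ t T → HasTy Sg Γ (.pure t) (.eff T)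
  | letin {Γ : List (Ty B)} {S T : Ty B} {t u : Tm Sg} :
      HasTy Sg Γ t (.eff S) → HasTy Sg (S :: Γ) u (.eff T) →
      HasTy Sg Γ (.letin t u) (.eff T)
  | effSym {Γ : List (Ty B)} {T : Ty B} {e : Sym} {ts : Fin (Sg.arity e) → Tm Sg} :
      Sg.isEffect e → (∀ i, HasTy Sg Γ (ts i) (.eff T)) →
      HasTy Sg Γ (.sym e ts) (.eff T)
  | funSym {Γ : List (Ty B)} {f : Sym} {ts : Fin (Sg.arity f) → Tm Sg} :
      ¬ Sg.isEffect f → (∀ i, HasTy Sg Γ (ts i) (Sg.argTy f i)) →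
      HasTy Sg Γ (.sym f ts) (Sg.resTy f)


/-! ### Auxiliary development -/

section Aux

open Relation

variable {Sym B : Type} {Sg : Signature Sym B} {gt : Sym → Sym → Prop}

namespace Tm

theorem subst_ext : ∀ (t : Tm Sg) {σ σ' : ℕ → Tm Sg}, (∀ n, σ n = σ' n) →
    t.subst σ = t.subst σ' := by
  intro t
  induction t with
  | var n => intro σ σ' h; exact h n
  | lam u ih =>
      intro σ σ' h
      simp only [subst]
      rw [ih (σ' := upSub σ') (fun n => by cases n <;> simp [upSub, h])]
  | app s t ihs iht => intro σ σ' h; simp only [subst]; rw [ihs h, iht h]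
  | pure t ih => intro σ σ' h; simp only [subst]; rw [ih h]
  | sym γ ts ih =>
      intro σ σ' h
      simp only [subst]
      congr 1
      funext i
      exact ih i h
  | letin t u iht ihu =>
      intro σ σ' h
      simp only [subst]
      rw [iht h, ihu (σ' := upSub σ') (fun n => by cases n <;> simp [upSub, h])]

theorem rename_eq_subst : ∀ (t : Tm Sg) (ρ : ℕ → ℕ),
    t.rename ρ = t.subst (fun n => .var (ρ n)) := by
  intro t
  induction t with
  | var n => intro ρ; rfl
  | lam u ih =>
      intro ρ
      simp only [rename, subst]
      rw [ih (upRen ρ)]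
      exact congrArg _ (subst_ext u (fun n => by
        cases n <;> simp [upSub, upRen, rename]))
  | app s t ihs iht => intro ρ; simp only [rename, subst, ihs, iht]
  | pure t ih => intro ρ; simp only [rename, subst, ih]
  | sym γ ts ih => intro ρ; simp only [rename, subst]; congr 1; funext i; exact ih i ρ
  | letin t u iht ihu =>
      intro ρ
      simp only [rename, subst]
      rw [iht, ihu (upRen ρ)]
      congr 1
      exact subst_ext u (fun n => by cases n <;> simp [upSub, upRen, rename])

theorem subst_rename : ∀ (t : Tm Sg) (ρ : ℕ → ℕ) (σ : ℕ → Tm Sg),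
    (t.rename ρ).subst σ = t.subst (fun n => σ (ρ n)) := by
  intro t
  induction t with
  | var n => intro ρ σ; rfl
  | lam u ih =>
      intro ρ σ
      simp only [rename, subst]
      rw [ih (upRen ρ) (upSub σ)]
      exact congrArg _ (subst_ext u (fun n => by cases n <;> simp [upSub, upRen]))
  | app s t ihs iht => intro ρ σ; simp only [rename, subst, ihs, iht]
  | pure t ih => intro ρ σ; simp only [rename, subst, ih]
  | sym γ ts ih => intro ρ σ; simp only [rename, subst]; congr 1; funext i; exact ih i ρ σ
  | letin t u iht ihu =>
      intro ρ σ
      simp only [rename, subst]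
      rw [iht, ihu (upRen ρ) (upSub σ)]
      congr 1
      exact subst_ext u (fun n => by cases n <;> simp [upSub, upRen])

theorem rename_rename : ∀ (t : Tm Sg) (ρ ρ' : ℕ → ℕ),
    (t.rename ρ).rename ρ' = t.rename (fun n => ρ' (ρ n)) := by
  intro t ρ ρ'
  rw [rename_eq_subst (t.rename ρ), subst_rename, rename_eq_subst]

theorem rename_subst : ∀ (t : Tm Sg) (σ : ℕ → Tm Sg) (ρ : ℕ → ℕ),
    (t.subst σ).rename ρ = t.subst (fun n => (σ n).rename ρ) := by
  intro t
  induction t with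
  | var n => intro σ ρ; rfl
  | lam u ih =>
      intro σ ρ
      simp only [subst, rename]
      rw [ih (upSub σ) (upRen ρ)]
      exact congrArg _ (subst_ext u (fun n => by
        cases n with
        | zero => rfl
        | succ n => simp only [upSub]; rw [rename_rename, rename_rename]; rfl))
  | app s t ihs iht => intro σ ρ; simp only [subst, rename, ihs, iht]
  | pure t ih => intro σ ρ; simp only [subst, rename, ih]
  | sym γ ts ih => intro σ ρ; simp only [subst, rename]; congr 1; funext i; exact ih i σ ρ
  | letin t u iht ihu =>
      intro σ ρ
      simp only [subst, rename]
      rw [iht, ihu (upSub σ) (upRen ρ)]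
      congr 1
      exact subst_ext u (fun n => by
        cases n with
        | zero => rfl
        | succ n => simp only [upSub]; rw [rename_rename, rename_rename]; rfl)

theorem subst_subst : ∀ (t : Tm Sg) (σ σ' : ℕ → Tm Sg),
    (t.subst σ).subst σ' = t.subst (fun n => (σ n).subst σ') := by
  intro t
  induction t with
  | var n => intro σ σ'; rfl
  | lam u ih =>
      intro σ σ'
      simp only [subst]
      rw [ih (upSub σ) (upSub σ')]
      exact congrArg _ (subst_ext u (fun n => by
        cases n with
        | zero => rfl
        | succ n =>
            simp only [upSub]
            rw [subst_rename, rename_subst]; rfl))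
  | app s t ihs iht => intro σ σ'; simp only [subst, ihs, iht]
  | pure t ih => intro σ σ'; simp only [subst, ih]
  | sym γ ts ih => intro σ σ'; simp only [subst]; congr 1; funext i; exact ih i σ σ'
  | letin t u iht ihu =>
      intro σ σ'
      simp only [subst]
      rw [iht, ihu (upSub σ) (upSub σ')]
      congr 1
      exact subst_ext u (fun n => by
        cases n with
        | zero => rfl
        | succ n =>
            simp only [upSub]
            rw [subst_rename, rename_subst]; rfl)

theorem subst_id : ∀ (t : Tm Sg), t.subst (fun n => .var n) = t := by
  intro t
  induction t with
  | var n => rfl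
  | lam u ih =>
      simp only [subst]
      rw [subst_ext u (σ' := fun n => .var n) (fun n => by cases n <;> simp [upSub, rename]), ih]
  | app s t ihs iht => simp only [subst]; rw [ihs, iht]
  | pure t ih => simp only [subst]; rw [ih]
  | sym γ ts ih => simp only [subst]; congr 1; funext i; exact ih i
  | letin t u iht ihu =>
      simp only [subst]
      rw [iht, subst_ext u (σ' := fun n => .var n)
        (fun n => by cases n <;> simp [upSub, rename]), ihu]

/-- The substitution used by `subst0`. -/
def sub0 (t : Tm Sg) : ℕ → Tm Sg := fun n => match n with | 0 => t | n + 1 => .var n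

theorem subst0_def (t u : Tm Sg) : subst0 t u = u.subst (sub0 t) := rfl

theorem subst0_subst (t u : Tm Sg) (σ : ℕ → Tm Sg) :
    (subst0 t u).subst σ = subst0 (t.subst σ) (u.subst (upSub σ)) := by
  rw [subst0_def, subst0_def, subst_subst, subst_subst]
  apply subst_ext
  intro n
  cases n with
  | zero => rfl
  | succ n =>
      simp only [sub0, upSub, subst_rename]
      rw [subst_ext (σ n) (σ' := fun m => .var m) (fun m => rfl), subst_id]
      rfl

theorem rename_up_subst0 (u₀ s : Tm Sg) :
    (u₀.rename (upRen Nat.succ)).subst (upSub (sub0 s)) = u₀ := by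
  rw [subst_rename]
  rw [subst_ext u₀ (σ' := fun n => .var n) (fun n => by
    cases n with
    | zero => rfl
    | succ n => simp [upRen, upSub, sub0, rename])]
  exact subst_id u₀

end Tm

/-- RPO is preserved by any "homomorphism" commuting with symbol application. -/
theorem RPO.hom (F : Tm Sg → Tm Sg)
    (hF : ∀ (γ : Sym) (ts : Fin (Sg.arity γ) → Tm Sg),
      F (.sym γ ts) = .sym γ (fun i => F (ts i)))
    {a b : Tm Sg} (h : RPO gt a b) : RPO gt (F a) (F b) := by
  induction h with
  | @lexArgs γ s t i hpre hlt hdom ihlt ihdom =>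
      rw [hF γ s, hF γ t]
      simp only [hF γ s] at ihdom
      exact .lexArgs i (fun j hj => congrArg F (hpre j hj)) ihlt ihdom
  | @symGt γ γ' s t hγ hdom ih =>
      rw [hF γ s, hF γ' t]
      simp only [hF γ s] at ih
      exact .symGt hγ ih
  | @subtermLt γ s i t h ih =>
      rw [hF γ s]
      exact .subtermLt i ih
  | @subtermEq γ s i t h =>
      rw [hF γ s]
      exact .subtermEq i (congrArg F h)

theorem RPO.substc {a b : Tm Sg} (h : RPO gt a b) (σ : ℕ → Tm Sg) :
    RPO gt (a.subst σ) (b.subst σ) :=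
  RPO.hom (fun t => t.subst σ) (fun _ _ => rfl) h

/-- `Step` is closed under substitution. -/
theorem Step.substc : ∀ {a b : Tm Sg}, Step gt a b → ∀ σ : ℕ → Tm Sg,
    Step gt (a.subst σ) (b.subst σ) := by
  intro a b h
  induction h with
  | rpo h => intro σ; exact .rpo (h.substc σ)
  | @beta u t =>
      intro σ
      simp only [Tm.subst]
      rw [Tm.subst0_subst]
      exact .beta
  | @letBeta t u =>
      intro σ
      simp only [Tm.subst]
      rw [Tm.subst0_subst]
      exact .letBeta
  | @letAssoc t₁ t₂ u =>
      intro σ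
      simp only [Tm.subst]
      have key : (u.rename (Tm.upRen Nat.succ)).subst (Tm.upSub (Tm.upSub σ))
          = (u.subst (Tm.upSub σ)).rename (Tm.upRen Nat.succ) := by
        rw [Tm.subst_rename, Tm.rename_subst]
        apply Tm.subst_ext
        intro n
        cases n with
        | zero => rfl
        | succ n =>
            simp only [Tm.upRen, Tm.upSub]
            rw [Tm.rename_rename, Tm.rename_rename]
            rfl
      rw [key]
      exact .letAssoc
  | @effAssoc e ts u he =>
      intro σ
      exact .effAssoc he
  | congLam h ih => intro σ; exact .congLam (ih (Tm.upSub σ))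
  | congApp₁ h ih => intro σ; exact .congApp₁ (ih σ)
  | congApp₂ h ih => intro σ; exact .congApp₂ (ih σ)
  | congPure h ih => intro σ; exact .congPure (ih σ)
  | @congSym γ ts i t' h ih =>
      intro σ
      have := Step.congSym (gt := gt) (ts := fun j => (ts j).subst σ) (i := i) (ih σ)
      have heq : (Function.update (fun j => (ts j).subst σ) i (t'.subst σ))
          = fun j => (Function.update ts i t' j).subst σ := by
        funext j
        by_cases hj : j = i
        · subst hj; simp
        · simp [Function.update_apply, hj]
      rw [heq] at this
      exact this
  | congLet₁ h ih => intro σ; exact .congLet₁ (ih σ)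
  | congLet₂ h ih => intro σ; exact .congLet₂ (ih (Tm.upSub σ))

theorem Step.renamec {a b : Tm Sg} (h : Step gt a b) (ρ : ℕ → ℕ) :
    Step gt (a.rename ρ) (b.rename ρ) := by
  rw [Tm.rename_eq_subst, Tm.rename_eq_subst]
  exact h.substc _

theorem rtgLift {α β : Type*} {r : α → α → Prop} {p : β → β → Prop} {a b : α} (f : α → β)
    (h : ∀ a b, r a b → p (f a) (f b)) (hab : ReflTransGen r a b) :
    ReflTransGen p (f a) (f b) :=
  ReflTransGen.lift f h a b hab

/-- Multi-step reduction on a single argument of a symbol. -/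
theorem rt_sym_update {γ : Sym} (ts : Fin (Sg.arity γ) → Tm Sg) (i : Fin (Sg.arity γ))
    {b : Tm Sg} (h : ReflTransGen (Step gt) (ts i) b) :
    ReflTransGen (Step gt) (.sym γ ts) (.sym γ (Function.update ts i b)) := by
  have := rtgLift (fun x => Tm.sym γ (Function.update ts i x))
    (fun a b hab => by
      have := Step.congSym (gt := gt) (ts := Function.update ts i a) (i := i)
        (by rw [Function.update_self]; exact hab)
      rwa [Function.update_idem] at this) h
  simp only [Function.update_eq_self] at this
  exact this

theorem rt_sym {γ : Sym} {ts ts' : Fin (Sg.arity γ) → Tm Sg}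
    (h : ∀ i, ReflTransGen (Step gt) (ts i) (ts' i)) :
    ReflTransGen (Step gt) (.sym γ ts) (.sym γ ts') := by
  let g : ℕ → Fin (Sg.arity γ) → Tm Sg := fun k i => if (i : ℕ) < k then ts' i else ts i
  have main : ∀ k, ReflTransGen (Step gt) (.sym γ ts) (.sym γ (g k)) := by
    intro k
    induction k with
    | zero =>
        have : g 0 = ts := by funext i; simp [g]
        rw [this]
    | succ k ih =>
        by_cases hk : k < Sg.arity γ
        · have hupd : g (k + 1) = Function.update (g k) ⟨k, hk⟩ (ts' ⟨k, hk⟩) := by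
            funext j
            by_cases hj : j = ⟨k, hk⟩
            · subst hj; simp [g]
            · have hjk : (j : ℕ) ≠ k := fun hc => hj (Fin.ext hc)
              rcases Nat.lt_or_ge (j : ℕ) k with h1 | h1
              · simp [g, Function.update_apply, hj, h1, Nat.lt_succ_of_lt h1]
              · have h2 : ¬ (j : ℕ) < k := Nat.not_lt.mpr h1
                have h3 : ¬ (j : ℕ) < k + 1 := by omega
                simp [g, Function.update_apply, hj, h2, h3]
          rw [hupd]
          refine ih.trans (rt_sym_update (g k) ⟨k, hk⟩ ?_)
          have : g k ⟨k, hk⟩ = ts ⟨k, hk⟩ := by simp [g]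
          rw [this]
          exact h ⟨k, hk⟩
        · have : g (k + 1) = g k := by
            funext j
            have hj : (j : ℕ) < k := lt_of_lt_of_le j.isLt (Nat.not_lt.mp hk)
            simp [g, hj, Nat.lt_succ_of_lt hj]
          rw [this]
          exact ih
  have hfin : g (Sg.arity γ) = ts' := by
    funext i; simp [g, i.isLt]
  have := main (Sg.arity γ)
  rwa [hfin] at this

/-- Multi-step reduction inside the values of a substitution. -/
theorem rt_subst : ∀ (u : Tm Sg) {σ σ' : ℕ → Tm Sg},
    (∀ n, ReflTransGen (Step gt) (σ n) (σ' n)) →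
    ReflTransGen (Step gt) (u.subst σ) (u.subst σ') := by
  intro u
  induction u with
  | var n => intro σ σ' h; exact h n
  | lam u ih =>
      intro σ σ' h
      exact rtgLift Tm.lam (fun _ _ hab => .congLam hab)
        (ih (fun n => by
          cases n with
          | zero => exact ReflTransGen.refl
          | succ n =>
              exact rtgLift (fun t => t.rename Nat.succ)
                (fun _ _ hab => hab.renamec _) (h n)))
  | app s t ihs iht =>
      intro σ σ' h
      refine ReflTransGen.trans
        (rtgLift (fun x => Tm.app x (t.subst σ)) (fun _ _ hab => .congApp₁ hab)
          (ihs h)) ?_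
      exact rtgLift (fun x => Tm.app (s.subst σ') x) (fun _ _ hab => .congApp₂ hab)
        (iht h)
  | pure t ih =>
      intro σ σ' h
      exact rtgLift Tm.pure (fun _ _ hab => .congPure hab) (ih h)
  | sym γ ts ih =>
      intro σ σ' h
      exact rt_sym (fun i => ih i h)
  | letin t u iht ihu =>
      intro σ σ' h
      refine ReflTransGen.trans
        (rtgLift (fun x => Tm.letin x (u.subst (Tm.upSub σ)))
          (fun _ _ hab => .congLet₁ hab) (iht h)) ?_
      exact rtgLift (fun x => Tm.letin (t.subst σ') x)
        (fun _ _ hab => .congLet₂ hab)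
        (ihu (fun n => by
          cases n with
          | zero => exact ReflTransGen.refl
          | succ n =>
              exact rtgLift (fun t => t.rename Nat.succ)
                (fun _ _ hab => hab.renamec _) (h n)))

theorem step_plug : ∀ (K : Kont Sg) {t t' : Tm Sg}, Step gt t t' →
    Step gt (K.plug t) (K.plug t') := by
  intro K
  induction K with
  | nil => intro t t' h; exact h
  | cons K u ih => intro t t' h; exact ih (.congLet₁ h)

theorem sn_of_step {a b : Tm Sg} (h : SN gt a) (hs : Step gt a b) : SN gt b :=
  Acc.inv h hs

theorem sn_of_rt {a b : Tm Sg} (h : SN gt a) (hr : ReflTransGen (Step gt) a b) :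
    SN gt b := by
  induction hr with
  | refl => exact h
  | tail _ hstep ih => exact Acc.inv ih hstep

/-- Classification of steps out of a plugged term. -/
theorem plug_inv : ∀ (K : Kont Sg) (t r : Tm Sg), Step gt (K.plug t) r →
    (∃ t', Step gt t t' ∧ r = K.plug t') ∨
    (∃ K' : Kont Sg, r = K'.plug t ∧ K'.len ≤ K.len ∧
      ∀ w, Step gt (K.plug w) (K'.plug w)) ∨
    (∃ (K₂ : Kont Sg) (u₀ : Tm Sg), K = .cons K₂ u₀ ∧
      ((∃ t₀, t = .pure t₀ ∧ r = K₂.plug (Tm.subst0 t₀ u₀)) ∨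
       (∃ t₁ t₂, t = .letin t₁ t₂ ∧
         r = K₂.plug (.letin t₁ (.letin t₂ (u₀.rename (Tm.upRen Nat.succ))))) ∨
       (∃ (e : Sym) (ts : Fin (Sg.arity e) → Tm Sg), Sg.isEffect e ∧ t = .sym e ts ∧
         r = K₂.plug (.sym e fun i => .letin (ts i) u₀)))) := by
  intro K
  induction K with
  | nil => intro t r h; exact Or.inl ⟨r, h, rfl⟩
  | cons K₂ u₀ ih =>
      intro t r h
      rcases ih (.letin t u₀) r h with ⟨t', ht, rfl⟩ | ⟨K', hr, hlen, hst⟩ | ⟨K₃, u₁, hK, hcc⟩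
      · -- a step of `letin t u₀`
        cases ht with
        | rpo h => cases h
        | letBeta =>
            exact Or.inr (Or.inr ⟨K₂, u₀, rfl, Or.inl ⟨_, rfl, rfl⟩⟩)
        | letAssoc =>
            exact Or.inr (Or.inr ⟨K₂, u₀, rfl, Or.inr (Or.inl ⟨_, _, rfl, rfl⟩)⟩)
        | effAssoc he =>
            exact Or.inr (Or.inr ⟨K₂, u₀, rfl, Or.inr (Or.inr ⟨_, _, he, rfl, rfl⟩)⟩)
        | congLet₁ h1 =>
            exact Or.inl ⟨_, h1, rfl⟩
        | @congLet₂ _ _ u₀' h2 =>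
            exact Or.inr (Or.inl ⟨.cons K₂ u₀', rfl, le_refl _,
              fun w => step_plug K₂ (.congLet₂ h2)⟩)
      · -- a step entirely inside K₂
        refine Or.inr (Or.inl ⟨.cons K' u₀, hr, ?_, fun w => hst (.letin w u₀)⟩)
        simpa [Kont.len] using Nat.succ_le_succ hlen
      · -- interaction of `letin t u₀` with the innermost frame of K₂
        subst hK
        rcases hcc with ⟨t₀, he, hr⟩ | ⟨t₁, t₂, he, hr⟩ | ⟨e, ts, heff, he, hr⟩
        · exact absurd he (by simp)
        · -- letAssoc at the junction: folds into case (ii)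
          injection he with he1 he2
          subst he1; subst he2; subst hr
          refine Or.inr (Or.inl ⟨.cons K₃ (.letin u₀ (u₁.rename (Tm.upRen Nat.succ))),
            rfl, ?_, fun w => step_plug K₃ .letAssoc⟩)
          simp [Kont.len]
        · exact absurd he (by simp)

end Aux

/-- Main auxiliary induction for STATEMENT 9. -/
theorem sn_let_pure_aux {Sym B : Type} {Sg : Signature Sym B} {gt : Sym → Sym → Prop} :
    ∀ (n : ℕ) (s : Tm Sg), SN gt s → ∀ p : Tm Sg, SN gt p →
    ∀ (K : Kont Sg) (u : Tm Sg), K.len ≤ n → p = K.plug (Tm.subst0 s u) →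
    SN gt (K.plug (Tm.letin (Tm.pure s) u)) := by
  intro n
  induction n using Nat.strong_induction_on with
  | _ n ihn =>
  intro s hs
  induction hs with
  | intro s hs ihs =>
  intro p hp
  induction hp with
  | intro p hp ihp =>
  intro K u hlen hpe
  subst hpe
  constructor
  intro r hr
  rcases plug_inv K _ r hr with ⟨t', ht, rfl⟩ | ⟨K', rfl, hKlen, hst⟩ | ⟨K₂, u₀, rfl, hcc⟩
  · -- a step of `letin (pure s) u` itself
    cases ht with
    | rpo h => cases h
    | letBeta => exact Acc.intro _ hp
    | congLet₁ h1 =>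
        cases h1 with
        | rpo h => cases h
        | @congPure _ s' h2 =>
            refine ihs s' h2 (K.plug (Tm.subst0 s' u)) ?_ K u hlen rfl
            refine sn_of_rt (Acc.intro _ hp) ?_
            refine rtgLift K.plug (fun _ _ hab => step_plug K hab) ?_
            exact rt_subst u (fun m => by
              cases m with
              | zero => exact Relation.ReflTransGen.single h2
              | succ m => exact Relation.ReflTransGen.refl)
    | @congLet₂ _ _ u' h2 =>
        refine ihp _ (step_plug K (h2.substc _)) K u' hlen rfl
  · -- a step entirely inside K
    exact ihp _ (hst _) K' u (le_trans hKlen hlen) rfl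
  · -- interaction with the innermost frame
    rcases hcc with ⟨t₀, he, hr⟩ | ⟨t₁, t₂, he, hr⟩ | ⟨e, ts, heff, he, hr⟩
    · exact absurd he (by simp)
    · -- letAssoc at the hole: use the n-induction
      injection he with he1 he2
      subst he1; subst he2; subst hr
      have hlt : K₂.len < n := by
        have : K₂.len + 1 ≤ n := by simpa [Kont.len] using hlen
        omega
      refine ihn K₂.len hlt s (Acc.intro s hs)
        (K₂.plug (Tm.subst0 s (.letin u (u₀.rename (Tm.upRen Nat.succ)))))
        ?_ K₂ (.letin u (u₀.rename (Tm.upRen Nat.succ))) le_rfl rfl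
      have : Tm.subst0 s (Tm.letin u (u₀.rename (Tm.upRen Nat.succ)))
          = Tm.letin (Tm.subst0 s u) u₀ := by
        show Tm.letin (Tm.subst0 s u) ((u₀.rename (Tm.upRen Nat.succ)).subst
          (Tm.upSub (Tm.sub0 s))) = _
        rw [Tm.rename_up_subst0]
      rw [this]
      exact Acc.intro _ hp
    · exact absurd he (by simp)

/-- For any continuation `K` and terms `s`, `u`: if `SN(s)` and
`SN(K@(u{s/x}))`, then `SN(K@(let x ⇐ pure(s) in u))`. -/
theorem sn_let_pure {Sym B : Type} {Sg : Signature Sym B} (gt : Sym → Sym → Prop)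
    (hwf : WellFounded (fun a b : Sym => gt b a)) (htrans : Transitive gt)
    (K : Kont Sg) (s u : Tm Sg)
    (hs : SN gt s) (hu : SN gt (K.plug (Tm.subst0 s u))) :
    SN gt (K.plug (Tm.letin (Tm.pure s) u)) := by
  exact sn_let_pure_aux K.len s hs _ hu K u le_rfl rfl
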